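/- Let (R,P_Ω) and (R'',P''_Ω) be multiple Rota-Baxter algebras of pair weight (λ_Ω,λ_Ω). Let (M,𝔪^R_Ω) be a right (R,P_Ω)-module and (N,𝔫^{R''}_Ω,𝔫^R_Ω) an (R'',P''_Ω)-(R,P_Ω)-bimodule. Then Hom_{(R,P_Ω)}(M,N) is a left (R'',P''_Ω)-module, where the R''-action is (r''φ)(m) := r''·φ(m) and the operators are 𝔮_ω(φ) := 𝔫^{R''}_ω ∘ φ. In particular: (i) for every right (R,P_Ω)-module homomorphism φ : M → N and every r'' ∈ R'', ω ∈ Ω, the maps r''φ and 𝔮_ω(φ) are again right (R,P_Ω)-module homomorphisms; and (ii) P''_α(r'')·𝔮_β(φ) = 𝔮_α(r''·𝔮_β(φ)) + 𝔮_β(P''_α(r'')·φ) + λ_β·𝔮_α(r''·φ) + λ_α·𝔮_β(r''·φ) for all r'' ∈ R'', α,β ∈ Ω. -/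
import Mathlib


open MulOpposite in
/-- If `(M, 𝔪_Ω)` is a right `(R, P_Ω)`-module and
`(N, 𝔫''_Ω, 𝔫_Ω)` is an `(R'', P''_Ω)`-`(R, P_Ω)`-bimodule, then the set of right
`(R, P_Ω)`-module homomorphisms `Hom_{(R,P_Ω)}(M, N)` is a left `(R'', P''_Ω)`-module
with action `(r''·φ)(m) := r''·φ(m)` and operators `𝔮_ω(φ) := 𝔫''_ω ∘ φ`; in
particular `r''·φ` and `𝔮_ω(φ)` are again right `(R, P_Ω)`-module homomorphisms, and
the multiple Rota-Baxter module identity holds for the `𝔮_ω`. -/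
theorem hom_into_bimodule_is_left_multiple_rota_baxter_module
    (k : Type*) [CommRing k]
    (R : Type*) [Ring R] [Algebra k R]
    (R'' : Type*) [Ring R''] [Algebra k R'']
    (Ω : Type*) [Nonempty Ω]
    (lam : Ω → k)
    (P : Ω → R →ₗ[k] R)
    (hP : ∀ (α β : Ω) (r₁ r₂ : R),
      P α r₁ * P β r₂ =
        P α (r₁ * P β r₂) + P β (P α r₁ * r₂)
          + lam β • P α (r₁ * r₂) + lam α • P β (r₁ * r₂))
    (P'' : Ω → R'' →ₗ[k] R'')
    (hP'' : ∀ (α β : Ω) (r₁ r₂ : R''),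
      P'' α r₁ * P'' β r₂ =
        P'' α (r₁ * P'' β r₂) + P'' β (P'' α r₁ * r₂)
          + lam β • P'' α (r₁ * r₂) + lam α • P'' β (r₁ * r₂))
    -- `M` is a right `(R, P_Ω)`-module
    (M : Type*) [AddCommGroup M] [Module k M] [Module Rᵐᵒᵖ M]
    [IsScalarTower k Rᵐᵒᵖ M]
    (mOp : Ω → M →ₗ[k] M)
    (hM : ∀ (α β : Ω) (x : R) (m : M),
      mOp β (op (P α x) • m) =
        mOp β (op x • mOp α m) + op (P α x) • mOp β m
          + lam β • (op x • mOp α m) + lam α • (op x • mOp β m))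
    -- `N` is an `(R'', P''_Ω)`-`(R, P_Ω)`-bimodule
    (N : Type*) [AddCommGroup N] [Module k N] [Module R'' N] [Module Rᵐᵒᵖ N]
    [IsScalarTower k R'' N] [IsScalarTower k Rᵐᵒᵖ N]
    [SMulCommClass R'' Rᵐᵒᵖ N] [SMulCommClass Rᵐᵒᵖ R'' N]
    (nOp'' : Ω → N →ₗ[k] N) (nOp : Ω → N →ₗ[k] N)
    (hN'' : ∀ (α β : Ω) (x : R'') (n : N),
      P'' α x • nOp'' β n =
        nOp'' α (x • nOp'' β n) + nOp'' β (P'' α x • n)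
          + lam β • nOp'' α (x • n) + lam α • nOp'' β (x • n))
    (hN : ∀ (α β : Ω) (x : R) (n : N),
      nOp β (op (P α x) • n) =
        nOp β (op x • nOp α n) + op (P α x) • nOp β n
          + lam β • (op x • nOp α n) + lam α • (op x • nOp β n))
    (hcomp₁ : ∀ (ω : Ω) (r'' : R'') (n : N), nOp ω (r'' • n) = r'' • nOp ω n)
    (hcomp₂ : ∀ (ω : Ω) (r : R) (n : N), nOp'' ω (op r • n) = op r • nOp'' ω n)
    (hcomp₃ : ∀ (ω τ : Ω) (n : N), nOp τ (nOp'' ω n) = nOp'' ω (nOp τ n)) :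
    -- the homomorphisms form an `R''`-submodule of `Hom_R(M, N)`
    (∃ S : Submodule R'' (M →ₗ[Rᵐᵒᵖ] N),
      (S : Set (M →ₗ[Rᵐᵒᵖ] N)) =
        {φ : M →ₗ[Rᵐᵒᵖ] N | ∀ (ω : Ω) (m : M), φ (mOp ω m) = nOp ω (φ m)}) ∧
    ∀ φ : M →ₗ[Rᵐᵒᵖ] N, (∀ (ω : Ω) (m : M), φ (mOp ω m) = nOp ω (φ m)) →
      -- (i) `r''·φ` is again a right `(R, P_Ω)`-module homomorphism
      (∀ (r'' : R'') (ω : Ω) (m : M),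
        (r'' • φ) (mOp ω m) = nOp ω ((r'' • φ) m)) ∧
      -- (i) `𝔮_ω(φ) = 𝔫''_ω ∘ φ` is again a right `(R, P_Ω)`-module homomorphism
      (∀ ω : Ω, ∃ ψ : M →ₗ[Rᵐᵒᵖ] N,
        (∀ m : M, ψ m = nOp'' ω (φ m)) ∧
        ∀ (τ : Ω) (m : M), ψ (mOp τ m) = nOp τ (ψ m)) ∧
      -- (ii) the multiple Rota-Baxter module identity for `𝔮_Ω`
      (∀ (r'' : R'') (α β : Ω) (m : M),
        P'' α r'' • nOp'' β (φ m) =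
          nOp'' α (r'' • nOp'' β (φ m)) + nOp'' β (P'' α r'' • φ m)
            + lam β • nOp'' α (r'' • φ m) + lam α • nOp'' β (r'' • φ m)) := by

  refine ⟨⟨{ carrier := setOf fun φ : M →ₗ[Rᵐᵒᵖ] N =>
               ∀ (ω : Ω) (m : M), φ (mOp ω m) = nOp ω (φ m),
             add_mem' := fun {a b} ha hb ω m => by
               simp [LinearMap.add_apply, ha ω m, hb ω m],
             zero_mem' := fun ω m => by simp,
             smul_mem' := fun c a ha ω m => by
               simp [LinearMap.smul_apply, ha ω m, hcomp₁] }, rfl⟩, ?_⟩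
  intro φ hφ
  refine ⟨?_, ?_, ?_⟩
  · intro r'' ω m
    simp [LinearMap.smul_apply, hφ ω m, hcomp₁]
  · intro ω
    refine ⟨{ toFun := fun m => nOp'' ω (φ m)
              map_add' := by intro a b; simp
              map_smul' := by
                intro r m
                simpa using hcomp₂ ω r.unop (φ m) }, fun m => rfl, ?_⟩
    intro τ m
    simp [hφ τ m, hcomp₃]
  · intro r'' α β m
    exact hN'' α β r'' (φ m)
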